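/- With the setup of the Local Perturb-and-MAP theorem (Y a finite product space, θ : Y → ℝ, disjoint blocks 𝓑, i.i.d. Gumbel perturbations per block), the expected number of block-coordinate-wise maxima of the perturbed potential ~θ equals Σ_{y∈Y} ∏_{β∈𝓑} p(y_β | y_{¬β}; θ). -/

import Mathlib

open MeasureTheory Real Finset
open scoped Classical

/-- Replace the coordinates of `y` inside the block `B` by the values given by `z`. -/
def blockUpd {n : ℕ} {Y : Fin n → Type*} (B : Finset (Fin n)) (y : ∀ j, Y j)
    (z : ∀ j : {j // j ∈ B}, Y j.1) : ∀ j, Y j :=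
  fun j => if h : j ∈ B then z ⟨j, h⟩ else y j

open scoped ENNReal

noncomputable section GumbelAux


/-- shifted Gumbel pdf -/
def gPdf (b t : ℝ) : ℝ := Real.exp (-(t+b)) * Real.exp (-Real.exp (-(t+b)))
/-- shifted Gumbel cdf -/
def gCdf (b t : ℝ) : ℝ := Real.exp (-Real.exp (-(t+b)))

lemma gPdf_nonneg (b t : ℝ) : 0 ≤ gPdf b t := by
  unfold gPdf; positivity

lemma gCdf_nonneg (b t : ℝ) : 0 ≤ gCdf b t := by
  unfold gCdf; positivity

lemma gCdf_hasDerivAt (b t : ℝ) : HasDerivAt (gCdf b) (gPdf b t) t := by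
  have h1 : HasDerivAt (fun t : ℝ => -(t+b)) (-1) t := by
    exact ((hasDerivAt_id t).add_const b).neg
  have h2 : HasDerivAt (fun t : ℝ => -Real.exp (-(t+b))) (Real.exp (-(t+b))) t := by
    have := (h1.exp).neg
    rw [show -(Real.exp (-(t+b)) * -1) = Real.exp (-(t+b)) by ring] at this
    exact this
  have h3 := h2.exp
  unfold gCdf gPdf
  convert h3 using 1
  ring

lemma gCdf_tendsto_atBot (b : ℝ) : Filter.Tendsto (gCdf b) Filter.atBot (nhds 0) := by
  have h1 : Filter.Tendsto (fun t : ℝ => -(t+b)) Filter.atBot Filter.atTop := by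
    apply Filter.tendsto_neg_atBot_atTop.comp
    exact Filter.tendsto_atBot_add_const_right _ b Filter.tendsto_id
  have h2 : Filter.Tendsto (fun t : ℝ => -Real.exp (-(t+b))) Filter.atBot Filter.atBot :=
    Filter.tendsto_neg_atTop_atBot.comp (Real.tendsto_exp_atTop.comp h1)
  exact Real.tendsto_exp_atBot.comp h2

lemma gCdf_tendsto_atTop (b : ℝ) : Filter.Tendsto (gCdf b) Filter.atTop (nhds 1) := by
  have h1 : Filter.Tendsto (fun t : ℝ => -(t+b)) Filter.atTop Filter.atBot := by
    apply Filter.tendsto_neg_atTop_atBot.comp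
    exact Filter.tendsto_atTop_add_const_right _ b Filter.tendsto_id
  have h2 : Filter.Tendsto (fun t : ℝ => Real.exp (-(t+b))) Filter.atTop (nhds 0) :=
    Real.tendsto_exp_atBot.comp h1
  have h3 : Filter.Tendsto (fun t : ℝ => -Real.exp (-(t+b))) Filter.atTop (nhds (-0)) := h2.neg
  rw [neg_zero] at h3
  have h4 : Filter.Tendsto (fun t : ℝ => Real.exp (-Real.exp (-(t+b)))) Filter.atTop
      (nhds (Real.exp 0)) := (Real.continuous_exp.continuousAt.tendsto).comp h3
  rw [Real.exp_zero] at h4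
  exact h4

lemma gPdf_continuous (b : ℝ) : Continuous (gPdf b) := by
  unfold gPdf; continuity

lemma aux_ineq {u : ℝ} (hu : 0 < u) : u * Real.exp (-u) ≤ 4 * u⁻¹ := by
  have h1 : u/2 + 1 ≤ Real.exp (u/2) := Real.add_one_le_exp _
  have h2 : (u/2 + 1)^2 ≤ (Real.exp (u/2))^2 := by
    apply pow_le_pow_left₀ (by positivity) h1
  have h3 : (Real.exp (u/2))^2 = Real.exp u := by
    rw [sq, ← Real.exp_add]; congr 1; ring
  have h4 : u^2 ≤ 4 * Real.exp u := by nlinarith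
  have h5 : 0 < Real.exp u := Real.exp_pos u
  rw [Real.exp_neg]
  rw [mul_inv_le_iff₀ h5, mul_comm (4 * u⁻¹) (Real.exp u), ← mul_assoc]
  calc u = u⁻¹ * u^2 := by field_simp
    _ ≤ u⁻¹ * (4 * Real.exp u) := by gcongr
    _ = Real.exp u * 4 * u⁻¹ := by ring

lemma gPdf_integrable (b : ℝ) : MeasureTheory.Integrable (gPdf b) := by
  have hmeas : MeasureTheory.AEStronglyMeasurable (gPdf b) volume :=
    (gPdf_continuous b).aestronglyMeasurable
  rw [← MeasureTheory.integrableOn_univ, ← Set.Iic_union_Ioi (a := (0:ℝ)),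
    MeasureTheory.integrableOn_union]
  constructor
  · apply MeasureTheory.Integrable.mono'
      (g := fun t => (4 * Real.exp b) * Real.exp t) ?_ hmeas.restrict ?_
    · exact ((integrableOn_exp_Iic (0:ℝ)).const_mul _)
    · filter_upwards with t
      rw [Real.norm_of_nonneg (gPdf_nonneg b t)]
      have := aux_ineq (Real.exp_pos (-(t+b)))
      calc gPdf b t ≤ 4 * (Real.exp (-(t+b)))⁻¹ := this
        _ = (4 * Real.exp b) * Real.exp t := by
            rw [← Real.exp_neg, neg_neg, Real.exp_add]; ring
  · apply MeasureTheory.Integrable.mono'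
      (g := fun t => Real.exp (-b) * Real.exp (-(1:ℝ) * t)) ?_ hmeas.restrict ?_
    · exact (exp_neg_integrableOn_Ioi (0:ℝ) one_pos).const_mul _
    · filter_upwards with t
      rw [Real.norm_of_nonneg (gPdf_nonneg b t)]
      unfold gPdf
      have h1 : Real.exp (-Real.exp (-(t+b))) ≤ 1 :=
        Real.exp_le_one_iff.mpr (neg_nonpos_of_nonneg (Real.exp_nonneg _))
      have h2 : Real.exp (-b) * Real.exp (-(1:ℝ) * t) = Real.exp (-(t+b)) := by
        rw [← Real.exp_add]; ring_nf
      rw [h2]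
      nlinarith [Real.exp_pos (-(t+b))]

/-- the integral of the Gumbel pdf over `Iic a` is the cdf. -/
lemma gPdf_integral_Iic (b a : ℝ) : ∫ t in Set.Iic a, gPdf b t = gCdf b a := by
  rw [integral_Iic_of_hasDerivAt_of_tendsto' (fun x _ => gCdf_hasDerivAt b x)
    (gPdf_integrable b).integrableOn (gCdf_tendsto_atBot b)]
  simp

/-- the integral of the Gumbel pdf over ℝ is 1. -/
lemma gPdf_integral (b : ℝ) : ∫ t, gPdf b t = 1 := by
  rw [integral_of_hasDerivAt_of_tendsto (fun x => gCdf_hasDerivAt b x)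
    (gPdf_integrable b) (gCdf_tendsto_atBot b) (gCdf_tendsto_atTop b)]
  simp


lemma gPdf_def : ∀ b t, gPdf b t = Real.exp (-(t+b)) * Real.exp (-Real.exp (-(t+b))) :=
  fun _ _ => rfl
lemma gCdf_def : ∀ b t, gCdf b t = Real.exp (-Real.exp (-(t+b))) := fun _ _ => rfl
local notation "γ" => Real.eulerMascheroniConstant

def gumbel : Measure ℝ := volume.withDensity (fun t => ENNReal.ofReal (gPdf γ t))

lemma gCdf_continuous (b : ℝ) : Continuous (gCdf b) := by
  have : gCdf b = fun t => Real.exp (-Real.exp (-(t+b))) := funext (gCdf_def b)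
  rw [this]; continuity

lemma gumbel_apply {s : Set ℝ} (hs : MeasurableSet s) :
    gumbel s = ∫⁻ t in s, ENNReal.ofReal (gPdf γ t) := withDensity_apply _ hs

lemma gumbel_Iic (a : ℝ) : gumbel (Set.Iic a) = ENNReal.ofReal (gCdf γ a) := by
  rw [gumbel_apply measurableSet_Iic, ← ofReal_integral_eq_lintegral_ofReal
    (gPdf_integrable γ).integrableOn (Filter.Eventually.of_forall fun t => gPdf_nonneg γ t),
    gPdf_integral_Iic]

instance : IsProbabilityMeasure gumbel := by
  constructor
  rw [gumbel_apply MeasurableSet.univ, Measure.restrict_univ, ← ofReal_integral_eq_lintegral_ofReal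
    (gPdf_integrable γ) (Filter.Eventually.of_forall fun t => gPdf_nonneg γ t),
    gPdf_integral]
  simp

lemma eq_gumbel {ν : Measure ℝ} [IsProbabilityMeasure ν]
    (h : ∀ t, ν (Set.Iic t) = ENNReal.ofReal (gCdf γ t)) : ν = gumbel :=
  MeasureTheory.Measure.ext_of_Iic ν gumbel (fun a => by rw [h, gumbel_Iic])

/-- The Gumbel argmax probability (softmax). -/
lemma gumbel_max {ι : Type*} [Fintype ι] [Nonempty ι] (c : ι → ℝ) (z0 : ι) :
    Measure.pi (fun _ : ι => gumbel) {v | ∀ z, c z + v z ≤ c z0 + v z0}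
      = ENNReal.ofReal (Real.exp (c z0) / ∑ z, Real.exp (c z)) := by
  classical
  set S : ℝ := ∑ z, Real.exp (c z - c z0) with hS
  have hS1 : S = 1 + ∑ z ∈ Finset.univ.erase z0, Real.exp (c z - c z0) := by
    rw [hS, ← Finset.add_sum_erase _ _ (Finset.mem_univ z0), sub_self, Real.exp_zero]
  have hSpos : 0 < S := by
    rw [hS1]
    have : 0 ≤ ∑ z ∈ Finset.univ.erase z0, Real.exp (c z - c z0) :=
      Finset.sum_nonneg fun z _ => (Real.exp_pos _).le
    linarith
  -- the target real number
  have hfinal : S⁻¹ = Real.exp (c z0) / ∑ z, Real.exp (c z) := by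
    have hpos : 0 < ∑ z, Real.exp (c z) :=
      Finset.sum_pos (fun z _ => Real.exp_pos _) ⟨z0, Finset.mem_univ z0⟩
    rw [hS]
    have : ∑ z, Real.exp (c z - c z0) = (∑ z, Real.exp (c z)) / Real.exp (c z0) := by
      rw [Finset.sum_div]
      exact Finset.sum_congr rfl fun z _ => by rw [Real.exp_sub]
    rw [this]
    field_simp
  -- the set is measurable
  have hT : MeasurableSet {v : ι → ℝ | ∀ z, c z + v z ≤ c z0 + v z0} := by
    rw [Set.setOf_forall]
    exact MeasurableSet.iInter fun z => measurableSet_le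
      ((measurable_pi_apply z).const_add _) ((measurable_pi_apply z0).const_add _)
  -- split off coordinate z0
  set p : ι → Prop := fun z => z = z0 with hp
  set e := MeasurableEquiv.piEquivPiSubtypeProd (fun _ : ι => ℝ) p with he
  have hMP := measurePreserving_piEquivPiSubtypeProd (fun _ : ι => gumbel) p
  set T := {v : ι → ℝ | ∀ z, c z + v z ≤ c z0 + v z0} with hTdef
  have hTs : MeasurableSet (e.symm ⁻¹' T) := e.symm.measurable hT
  have step1 : Measure.pi (fun _ : ι => gumbel) T =
      Measure.map e (Measure.pi fun _ : ι => gumbel) (e.symm ⁻¹' T) := by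
    rw [Measure.map_apply e.measurable hTs, ← Set.preimage_comp]
    have : ⇑e.symm ∘ ⇑e = id := by ext v; simp
    rw [this, Set.preimage_id]
  -- the inner sets are boxes
  set Φ : ℝ → ℝ≥0∞ := fun t => ∏ z' : {z // ¬ p z}, ENNReal.ofReal (gCdf γ (t + c z0 - c z'.1))
    with hΦ
  have hsection : ∀ x : Subtype p → ℝ,
      (Prod.mk x ⁻¹' (e.symm ⁻¹' T)) =
        Set.pi Set.univ (fun z' : {z // ¬ p z} => Set.Iic (x ⟨z0, rfl⟩ + c z0 - c z'.1)) := by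
    intro x
    ext w
    have hev : ∀ z (h : ¬ p z), e.symm (x, w) z = w ⟨z, h⟩ := by
      intro z h
      simp [he, MeasurableEquiv.piEquivPiSubtypeProd, Equiv.piEquivPiSubtypeProd, h]
    have hev0 : e.symm (x, w) z0 = x ⟨z0, rfl⟩ := by
      have h : p z0 := rfl
      simp only [he, MeasurableEquiv.piEquivPiSubtypeProd, Equiv.piEquivPiSubtypeProd,
        MeasurableEquiv.symm_mk, MeasurableEquiv.coe_mk, Equiv.coe_fn_symm_mk]
      exact dif_pos h
    constructor
    · intro hw z' _
      have := hw z'.1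
      rw [hev z'.1 z'.2, hev0] at this
      simp only [Set.mem_Iic]
      linarith
    · intro hw z
      by_cases h : p z
      · have : z = z0 := h
        subst this
        rw [hev0]
      · rw [hev z h, hev0]
        have := hw ⟨z, h⟩ (Set.mem_univ _)
        simp only [Set.mem_Iic] at this
        linarith
  have hd : ∀ z : Subtype p, z = ⟨z0, rfl⟩ := fun z => Subtype.ext z.2
  letI F1 : Fintype (Subtype p) := Subtype.fintype p
  have hmap_eq : Measure.map (fun x : Subtype p → ℝ => x ⟨z0, rfl⟩)
      (@Measure.pi (Subtype p) (fun _ => ℝ) F1 (fun _ => inferInstance)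
        (fun _ => gumbel)) = gumbel := by
    haveI : IsProbabilityMeasure (Measure.map (fun x : Subtype p → ℝ => x ⟨z0, rfl⟩)
        (@Measure.pi (Subtype p) (fun _ => ℝ) F1 (fun _ => inferInstance)
          (fun _ => gumbel))) :=
      Measure.isProbabilityMeasure_map (measurable_pi_apply _).aemeasurable
    apply eq_gumbel
    intro t
    rw [Measure.map_apply (measurable_pi_apply _) measurableSet_Iic]
    have hset : (fun x : Subtype p → ℝ => x ⟨z0, rfl⟩) ⁻¹' (Set.Iic t)
        = Set.pi Set.univ (fun _ : Subtype p => Set.Iic t) := by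
      ext x
      constructor
      · intro hx z _
        rw [hd z]
        exact hx
      · intro hx
        exact hx ⟨z0, rfl⟩ (Set.mem_univ _)
    rw [hset, Measure.pi_pi, Finset.prod_const]
    have hcard : (Finset.univ : Finset (Subtype p)).card = 1 := by
      rw [Finset.card_univ]
      exact Fintype.card_eq_one_iff.mpr ⟨⟨z0, rfl⟩, fun z => hd z⟩
    rw [hcard, pow_one, gumbel_Iic]
  have hΦmeas : Measurable Φ := by
    apply Finset.measurable_prod
    intro z' _
    exact ENNReal.measurable_ofReal.comp
      (((gCdf_continuous γ).comp (by fun_prop : Continuous fun t : ℝ => t + c z0 - c ↑z')).measurable)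
  have step23 : Measure.map e (Measure.pi fun _ : ι => gumbel) (e.symm ⁻¹' T)
      = ∫⁻ t, Φ t ∂gumbel := by
    rw [hMP.map_eq, Measure.prod_apply hTs]
    have hsec' : ∀ x : Subtype p → ℝ,
        (Measure.pi fun _ : {i // ¬ p i} => gumbel) (Prod.mk x ⁻¹' (⇑e.symm ⁻¹' T))
          = Φ (x ⟨z0, rfl⟩) := by
      intro x
      rw [hsection x, Measure.pi_pi]
      exact Finset.prod_congr rfl fun z' _ => gumbel_Iic _
    simp only [hsec']
    show (∫⁻ x : Subtype p → ℝ, Φ (x ⟨z0, rfl⟩)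
        ∂(@Measure.pi (Subtype p) (fun _ => ℝ) F1 (fun _ => inferInstance) (fun _ => gumbel)))
      = ∫⁻ t, Φ t ∂gumbel
    conv_rhs => rw [← hmap_eq]
    exact (lintegral_map (g := fun x : Subtype p → ℝ => x ⟨z0, rfl⟩) hΦmeas
      (measurable_pi_apply _)).symm
  -- express as a Lebesgue integral and compute
  have key : ∀ t, gPdf γ t * ∏ z' : {z // ¬ p z}, gCdf γ (t + c z0 - c z'.1)
      = S⁻¹ * gPdf (γ - Real.log S) t := by
    intro t
    have hprod : ∏ z' : {z // ¬ p z}, gCdf γ (t + c z0 - c z'.1)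
        = ∏ z ∈ Finset.univ.erase z0, gCdf γ (t + c z0 - c z) :=
      (Finset.prod_subtype (p := fun z => ¬ p z) (Finset.univ.erase z0)
        (fun z => by simp [hp, Finset.mem_erase])
        (fun z => gCdf γ (t + c z0 - c z))).symm
    rw [hprod]
    have hexp : ∀ z : ι, Real.exp (-(t + c z0 - c z + γ)) =
        Real.exp (c z - c z0) * Real.exp (-(t+γ)) := by
      intro z; rw [← Real.exp_add]; ring_nf
    have hcdfs : ∏ z ∈ Finset.univ.erase z0, gCdf γ (t + c z0 - c z)
        = Real.exp (-((∑ z ∈ Finset.univ.erase z0, Real.exp (c z - c z0)) * Real.exp (-(t+γ)))) := by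
      rw [Finset.sum_mul, ← Finset.sum_neg_distrib, Real.exp_sum]
      exact Finset.prod_congr rfl fun z _ => by rw [gCdf_def, hexp]
    rw [hcdfs, gPdf_def, gPdf_def]
    have hlog : Real.exp (-(t + (γ - Real.log S))) = S * Real.exp (-(t+γ)) := by
      rw [show -(t + (γ - Real.log S)) = Real.log S + -(t+γ) by ring, Real.exp_add,
        Real.exp_log hSpos]
    rw [hlog]
    set u := Real.exp (-(t+γ)) with hu
    set E := ∑ z ∈ Finset.univ.erase z0, Real.exp (c z - c z0) with hE
    have h1 : Real.exp (-u) * Real.exp (-(E*u)) = Real.exp (-(S*u)) := by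
      rw [← Real.exp_add]; congr 1; rw [hS1]; ring
    calc u * Real.exp (-u) * Real.exp (-(E*u)) = u * (Real.exp (-u) * Real.exp (-(E*u))) := by ring
      _ = u * Real.exp (-(S*u)) := by rw [h1]
      _ = (S⁻¹ * S) * (u * Real.exp (-(S*u))) := by rw [inv_mul_cancel₀ hSpos.ne', one_mul]
      _ = S⁻¹ * (S * u * Real.exp (-(S*u))) := by ring
  have step4 : ∫⁻ t, Φ t ∂gumbel = ENNReal.ofReal S⁻¹ := by
    rw [gumbel, lintegral_withDensity_eq_lintegral_mul (μ := volume)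
      (f := fun t => ENNReal.ofReal (gPdf γ t))
      ((gPdf_continuous γ).measurable.ennreal_ofReal) hΦmeas]
    have h2 : ∫⁻ a, ((fun t => ENNReal.ofReal (gPdf γ t)) * Φ) a ∂volume
        = ∫⁻ a, ENNReal.ofReal (S⁻¹ * gPdf (γ - Real.log S) a) ∂volume := by
      apply lintegral_congr
      intro a
      simp only [Pi.mul_apply, hΦ]
      rw [← ENNReal.ofReal_prod_of_nonneg (fun z' _ => gCdf_nonneg _ _),
        ← ENNReal.ofReal_mul (gPdf_nonneg _ _), key a]
    rw [h2, ← ofReal_integral_eq_lintegral_ofReal ((gPdf_integrable _).const_mul _)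
      (Filter.Eventually.of_forall fun t => mul_nonneg (by positivity) (gPdf_nonneg _ _))]
    rw [integral_const_mul, gPdf_integral, mul_one]
  rw [step1, step23, step4, hfinal]


end GumbelAux

noncomputable section Main

/-- joint law of an independent family, doubly indexed, is the double product measure. -/
lemma joint_law {Ω : Type*} [MeasurableSpace Ω] (μ : Measure Ω) [IsProbabilityMeasure μ]
    {m : ℕ} {Z : Fin m → Type*} [∀ k, Fintype (Z k)]
    (ε : ∀ k, Z k → Ω → ℝ) (hmeas : ∀ k z, Measurable (ε k z))
    (hindep : ProbabilityTheory.iIndepFun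
      (m := fun _ : Σ k : Fin m, Z k => (inferInstance : MeasurableSpace ℝ))
      (fun p => ε p.1 p.2) μ) :
    Measure.map (fun ω k z => ε k z ω) μ
      = Measure.pi (fun k => Measure.pi (fun z : Z k => Measure.map (ε k z) μ)) := by
  classical
  haveI : ∀ k (z : Z k), IsProbabilityMeasure (Measure.map (ε k z) μ) :=
    fun k z => Measure.isProbabilityMeasure_map (hmeas k z).aemeasurable
  have hg : Measurable (fun ω (k : Fin m) (z : Z k) => ε k z ω) :=
    measurable_pi_lambda _ fun k => measurable_pi_lambda _ fun z => hmeas k z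
  symm
  apply Measure.pi_eq_generateFrom
    (C := fun k => Set.pi Set.univ '' Set.pi Set.univ fun _ : Z k => {s : Set ℝ | MeasurableSet s})
  · exact fun k => generateFrom_pi
  · exact fun k => isPiSystem_pi
  · intro k
    refine ⟨fun _ => Set.univ, fun _ => ⟨fun _ => Set.univ, fun z _ => by simp, by simp⟩,
      fun _ => by rw [measure_univ]; exact ENNReal.one_lt_top, Set.iUnion_const _⟩
  · intro s hs
    choose t ht hteq using fun k => hs k
    have htm : ∀ k (z : Z k), MeasurableSet (t k z) := by
      intro k z
      exact ht k z (Set.mem_univ z)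
    have hpre : (fun ω (k : Fin m) (z : Z k) => ε k z ω) ⁻¹' Set.pi Set.univ s
        = ⋂ p : Σ k : Fin m, Z k, ε p.1 p.2 ⁻¹' t p.1 p.2 := by
      ext ω
      simp only [Set.mem_preimage, Set.mem_pi, Set.mem_univ, forall_true_left, Set.mem_iInter,
        Sigma.forall]
      constructor
      · intro h k z
        have := h k
        rw [← hteq k] at this
        exact this z (Set.mem_univ z)
      · intro h k
        rw [← hteq k]
        intro z _
        exact h k z
    have hsmeas : ∀ k, MeasurableSet (s k) := by
      intro k
      rw [← hteq k]
      exact MeasurableSet.pi Set.countable_univ (fun z _ => htm k z)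
    rw [Measure.map_apply hg (MeasurableSet.pi Set.countable_univ (fun k _ => hsmeas k)), hpre]
    rw [hindep.meas_iInter (fun p => ⟨t p.1 p.2, htm p.1 p.2, rfl⟩)]
    rw [← Finset.univ_sigma_univ, Finset.prod_sigma]
    refine Finset.prod_congr rfl fun k _ => ?_
    rw [← hteq k, Measure.pi_pi]
    exact Finset.prod_congr rfl fun z _ => (Measure.map_apply (hmeas k z) (htm k z)).symm

/-- **Expected number of block-coordinate-wise maxima.** In the Local Perturb-and-MAP
setting, the expected cardinality of the random set of block-coordinate-wise maxima of the
perturbed potential equals `∑ y, ∏ k, p(y_{β k} | y_{¬β k}; θ)`. -/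
theorem expected_num_local_maxima {n m : ℕ} {Y : Fin n → Type*}
    [∀ j, Fintype (Y j)] [∀ j, Nonempty (Y j)] [∀ j, DecidableEq (Y j)]
    (θ : (∀ j, Y j) → ℝ)
    (β : Fin m → Finset (Fin n))
    (hdisj : ∀ k l, k ≠ l → Disjoint (β k) (β l))
    {Ω : Type*} [MeasurableSpace Ω] (μ : Measure Ω) [IsProbabilityMeasure μ]
    (ε : (k : Fin m) → ((j : {j // j ∈ β k}) → Y j.1) → Ω → ℝ)
    (hmeas : ∀ k z, Measurable (ε k z))
    (hindep : ProbabilityTheory.iIndepFun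
      (m := fun _ : Σ k : Fin m, ((j : {j // j ∈ β k}) → Y j.1) =>
        (inferInstance : MeasurableSpace ℝ))
      (fun p => ε p.1 p.2) μ)
    (hcdf : ∀ k z t, μ {ω | ε k z ω ≤ t} =
      ENNReal.ofReal (Real.exp (-Real.exp (-(t + Real.eulerMascheroniConstant))))) :
    ∫ ω, ((Finset.univ.filter (fun y : ∀ j, Y j =>
        ∀ k, ∀ z : (j : {j // j ∈ β k}) → Y j.1,
          θ (blockUpd (β k) y z) + ∑ l, ε l (fun j => blockUpd (β k) y z j.1) ω ≤
            θ y + ∑ l, ε l (fun j => y j.1) ω)).card : ℝ) ∂μ =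
      ∑ y : ∀ j, Y j, ∏ k, (Real.exp (θ y) /
        ∑ z : (j : {j // j ∈ β k}) → Y j.1, Real.exp (θ (blockUpd (β k) y z))) := by
  classical
  -- abbreviations
  set Z : Fin m → Type _ := fun k => (j : {j // j ∈ β k}) → Y j.1 with hZ
  set P : (∀ j, Y j) → Ω → Prop := fun y ω =>
    ∀ k, ∀ z : Z k,
      θ (blockUpd (β k) y z) + ∑ l, ε l (fun j => blockUpd (β k) y z j.1) ω ≤
        θ y + ∑ l, ε l (fun j => y j.1) ω with hP
  -- block restriction facts
  have hres : ∀ k y (z : Z k), (fun j : {j // j ∈ β k} => blockUpd (β k) y z j.1) = z := by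
    intro k y z
    funext j
    exact dif_pos j.2
  have hresne : ∀ k l y (z : Z k), l ≠ k →
      (fun j : {j // j ∈ β l} => blockUpd (β k) y z j.1) = (fun j : {j // j ∈ β l} => y j.1) := by
    intro k l y z hne
    funext j
    have hj : j.1 ∉ β k := fun hjk => Finset.disjoint_left.mp (hdisj l k hne) j.2 hjk
    exact dif_neg hj
  have hupd_self : ∀ k (y : ∀ j, Y j), blockUpd (β k) y (fun j : {j // j ∈ β k} => y j.1) = y := by
    intro k y
    funext j
    by_cases h : j ∈ β k <;> simp [blockUpd, h]
  -- the condition simplifies blockwise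
  have hcond : ∀ y ω k (z : Z k),
      (θ (blockUpd (β k) y z) + ∑ l, ε l (fun j => blockUpd (β k) y z j.1) ω ≤
        θ y + ∑ l, ε l (fun j => y j.1) ω)
      ↔ (θ (blockUpd (β k) y z) + ε k z ω ≤ θ y + ε k (fun j => y j.1) ω) := by
    intro y ω k z
    have hsum1 : ∑ l, ε l (fun j => blockUpd (β k) y z j.1) ω
        = ε k z ω + ∑ l ∈ Finset.univ.erase k, ε l (fun j => y j.1) ω := by
      rw [← Finset.add_sum_erase _ _ (Finset.mem_univ k), hres k y z]
      congr 1
      refine Finset.sum_congr rfl fun l hl => ?_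
      rw [hresne k l y z (Finset.mem_erase.mp hl).1]
    have hsum2 : ∑ l, ε l (fun j => y j.1) ω
        = ε k (fun j => y j.1) ω + ∑ l ∈ Finset.univ.erase k, ε l (fun j => y j.1) ω :=
      (Finset.add_sum_erase _ _ (Finset.mem_univ k)).symm
    rw [hsum1, hsum2]
    constructor <;> intro h <;> linarith
  -- the event as a preimage
  set g : Ω → ∀ k, Z k → ℝ := fun ω k z => ε k z ω with hgdef
  have hg : Measurable g :=
    measurable_pi_lambda _ fun k => measurable_pi_lambda _ fun z => hmeas k z
  set T : (∀ j, Y j) → ∀ k, Set (Z k → ℝ) := fun y k =>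
    {v | ∀ z : Z k, θ (blockUpd (β k) y z) + v z ≤ θ y + v (fun j => y j.1)} with hT
  have hTmeas : ∀ y k, MeasurableSet (T y k) := by
    intro y k
    rw [hT]
    simp only [Set.setOf_forall]
    exact MeasurableSet.iInter fun z => measurableSet_le
      ((measurable_pi_apply z).const_add _) ((measurable_pi_apply _).const_add _)
  have hset : ∀ y, {ω | P y ω} = g ⁻¹' Set.pi Set.univ (T y) := by
    intro y
    ext ω
    simp only [hP, Set.mem_setOf_eq, Set.mem_preimage, Set.mem_pi, Set.mem_univ, forall_true_left,
      hT, hgdef]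
    constructor
    · intro h k z
      exact (hcond y ω k z).mp (h k z)
    · intro h k z
      exact (hcond y ω k z).mpr (h k z)
  have hPmeas : ∀ y, MeasurableSet {ω | P y ω} := by
    intro y
    rw [hset]
    exact hg (MeasurableSet.pi Set.countable_univ fun k _ => hTmeas y k)
  -- laws
  have hlaw : ∀ k (z : Z k), Measure.map (ε k z) μ = gumbel := by
    intro k z
    haveI : IsProbabilityMeasure (Measure.map (ε k z) μ) :=
      Measure.isProbabilityMeasure_map (hmeas k z).aemeasurable
    apply eq_gumbel
    intro t
    rw [Measure.map_apply (hmeas k z) measurableSet_Iic, gCdf_def]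
    exact hcdf k z t
  -- measures of the events
  have hmu : ∀ y, μ {ω | P y ω} = ∏ k, ENNReal.ofReal (Real.exp (θ y) /
      ∑ z : Z k, Real.exp (θ (blockUpd (β k) y z))) := by
    intro y
    rw [hset, ← Measure.map_apply hg (MeasurableSet.pi Set.countable_univ fun k _ => hTmeas y k)]
    rw [joint_law μ ε hmeas hindep]
    have : ∀ k, Measure.pi (fun z : Z k => Measure.map (ε k z) μ)
        = Measure.pi (fun _ : Z k => gumbel) := by
      intro k
      congr 1
      funext z
      exact hlaw k z
    rw [show (fun k => Measure.pi (fun z : Z k => Measure.map (ε k z) μ))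
        = fun k => Measure.pi (fun _ : Z k => gumbel) from funext this]
    rw [Measure.pi_pi]
    refine Finset.prod_congr rfl fun k _ => ?_
    have hTk : T y k = {v : Z k → ℝ | ∀ z : Z k,
        (fun z' => θ (blockUpd (β k) y z')) z + v z ≤
          (fun z' => θ (blockUpd (β k) y z')) (fun j => y j.1) + v (fun j => y j.1)} := by
      rw [hT]
      simp only [hupd_self k y]
    rw [hTk, gumbel_max (fun z' : Z k => θ (blockUpd (β k) y z')) (fun j => y j.1)]
    rw [hupd_self k y]
  -- compute the integral
  have hcard : ∀ ω, ((Finset.univ.filter (fun y : ∀ j, Y j => P y ω)).card : ℝ)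
      = ∑ y : ∀ j, Y j, Set.indicator {ω' | P y ω'} (fun _ => (1:ℝ)) ω := by
    intro ω
    rw [Finset.card_filter]
    push_cast
    refine Finset.sum_congr rfl fun y _ => ?_
    by_cases h : P y ω <;> simp [Set.indicator_apply, h]
  have hint : ∀ y : ∀ j, Y j,
      MeasureTheory.Integrable (Set.indicator {ω' | P y ω'} (fun _ => (1:ℝ))) μ := by
    intro y
    rw [integrable_indicator_iff (hPmeas y)]
    exact integrableOn_const (measure_lt_top μ _).ne
  calc ∫ ω, ((Finset.univ.filter (fun y : ∀ j, Y j => P y ω)).card : ℝ) ∂μ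
      = ∫ ω, ∑ y : ∀ j, Y j, Set.indicator {ω' | P y ω'} (fun _ => (1:ℝ)) ω ∂μ := by
        exact integral_congr_ae (Filter.Eventually.of_forall hcard)
    _ = ∑ y : ∀ j, Y j, ∫ ω, Set.indicator {ω' | P y ω'} (fun _ => (1:ℝ)) ω ∂μ :=
        integral_finset_sum _ fun y _ => hint y
    _ = ∑ y : ∀ j, Y j, ∏ k, (Real.exp (θ y) /
        ∑ z : Z k, Real.exp (θ (blockUpd (β k) y z))) := by
        refine Finset.sum_congr rfl fun y _ => ?_
        rw [integral_indicator_const (1:ℝ) (hPmeas y), smul_eq_mul, mul_one, measureReal_def, hmu y,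
          ENNReal.toReal_prod]
        refine Finset.prod_congr rfl fun k _ => ?_
        rw [ENNReal.toReal_ofReal]
        positivity

end Main
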